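/- Let (X,T) be a minimal system on a compact metric space. Then N_d(X,T) = N_d(X,T^{-1}) for every d ≥ 1, and N_d(X,T^n) ⊆ N_d(X,T) for every nonzero integer n; moreover N_d(X,T) = ⋃_{l,k=0}^{n-1} σ_d^l τ_d^k N_d(X,T^n), where σ_d = T×…×T and τ_d = T×T²×…×T^d. -/

import Mathlib

/-- `N_d(X,S)`: the closure in `X^d` of the orbit of the diagonal under the
group generated by `S×S²×…×S^d` and `S×…×S`, i.e. the closure of
`{(S^{k+l}x, S^{k+2l}x, …, S^{k+dl}x) : x ∈ X, k l ∈ ℤ}`. -/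
def NdFull {X : Type*} [MetricSpace X] (d : ℕ) (S : Equiv.Perm X) :
    Set (Fin d → X) :=
  closure {v | ∃ (x : X) (k l : ℤ),
    v = fun i : Fin d => (S ^ (k + ((i : ℕ) + 1) * l)) x}

section aux
variable {X : Type*} [MetricSpace X]

lemma cont_zpow_aux (T : X ≃ₜ X) : ∀ m : ℤ, Continuous ⇑(T.toEquiv ^ m) := by
  have h1 : Continuous ⇑T.toEquiv := T.continuous
  have h2 : Continuous ⇑(T.toEquiv⁻¹) := T.symm.continuous
  intro m
  induction m using Int.induction_on with
  | zero => simpa using continuous_id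
  | succ k ih =>
      have h : T.toEquiv ^ ((k : ℤ) + 1) = T.toEquiv ^ (k : ℤ) * T.toEquiv := zpow_add_one _ _
      rw [h]
      simpa [Equiv.Perm.coe_mul] using ih.comp h1
  | pred k ih =>
      have h : T.toEquiv ^ (-(k : ℤ) - 1) = T.toEquiv ^ (-(k : ℤ)) * T.toEquiv⁻¹ := zpow_sub_one _ _
      rw [h]
      simpa [Equiv.Perm.coe_mul] using ih.comp h2

def zpowHomeo (T : X ≃ₜ X) (m : ℤ) : X ≃ₜ X where
  toEquiv := T.toEquiv ^ m
  continuous_toFun := cont_zpow_aux T m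
  continuous_invFun := by
    have h0 : (T.toEquiv ^ m)⁻¹ = T.toEquiv ^ (-m) := by rw [zpow_neg]
    show Continuous ⇑(T.toEquiv ^ m).symm
    have h : (T.toEquiv ^ m).symm = T.toEquiv ^ (-m) := by rw [← h0]; rfl
    rw [h]; exact cont_zpow_aux T _

end aux

theorem stmt_19 {X : Type*} [MetricSpace X] [CompactSpace X] (T : X ≃ₜ X)
    (hmin : ∀ x : X, Dense {y | ∃ m : ℤ, y = (T.toEquiv ^ m) x})
    (d : ℕ) (hd : 1 ≤ d) :
    (NdFull d T.toEquiv = NdFull d T.toEquiv⁻¹) ∧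
    (∀ n : ℤ, n ≠ 0 → NdFull d (T.toEquiv ^ n) ⊆ NdFull d T.toEquiv) ∧
    (∀ n : ℕ, 0 < n → NdFull d T.toEquiv =
      ⋃ l ∈ Finset.range n, ⋃ k ∈ Finset.range n,
        (fun v : Fin d → X =>
            fun i : Fin d => (T.toEquiv ^ ((l : ℤ) + ((i : ℕ) + 1) * (k : ℤ))) (v i)) ''
          NdFull d (T.toEquiv ^ n)) := by
  classical
  refine ⟨?_, ?_, ?_⟩
  · -- (1)
    have hbase : {v : Fin d → X | ∃ (x : X) (k l : ℤ),
          v = fun i : Fin d => (T.toEquiv ^ (k + ((i : ℕ) + 1) * l)) x}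
        = {v : Fin d → X | ∃ (x : X) (k l : ℤ),
          v = fun i : Fin d => (T.toEquiv⁻¹ ^ (k + ((i : ℕ) + 1) * l)) x} := by
      ext v
      constructor
      · rintro ⟨x, k, l, rfl⟩
        refine ⟨x, -k, -l, ?_⟩
        funext i
        have h : (T.toEquiv⁻¹) ^ (-k + ((i : ℕ) + 1) * (-l)) = T.toEquiv ^ (k + ((i : ℕ) + 1) * l) := by
          rw [inv_zpow, ← zpow_neg]; congr 1; ring
        rw [h]
      · rintro ⟨x, k, l, rfl⟩
        refine ⟨x, -k, -l, ?_⟩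
        funext i
        have h : T.toEquiv ^ (-k + ((i : ℕ) + 1) * (-l)) = (T.toEquiv⁻¹) ^ (k + ((i : ℕ) + 1) * l) := by
          rw [inv_zpow, ← zpow_neg]; congr 1; ring
        rw [h]
    unfold NdFull
    rw [hbase]
  · -- (2)
    intro n hn
    unfold NdFull
    apply closure_mono
    rintro v ⟨x, k, l, rfl⟩
    refine ⟨x, n * k, n * l, ?_⟩
    funext i
    have h : (T.toEquiv ^ n) ^ (k + ((i : ℕ) + 1) * l)
        = T.toEquiv ^ (n * k + ((i : ℕ) + 1) * (n * l)) := by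
      rw [← zpow_mul]; congr 1; ring
    rw [h]
  · -- (3)
    intro n hn
    have hn0 : (n : ℤ) ≠ 0 := by exact_mod_cast hn.ne'
    have hnpow : ∀ m : ℤ, (T.toEquiv ^ n) ^ m = T.toEquiv ^ ((n : ℤ) * m) := by
      intro m; rw [← zpow_natCast T.toEquiv n, ← zpow_mul]
    set F : ℤ → ℤ → ((Fin d → X) ≃ₜ (Fin d → X)) :=
      fun a b => Homeomorph.piCongrRight fun i : Fin d => zpowHomeo T (a + ((i : ℕ) + 1) * b)
      with hF
    have hFcoe : ∀ a b : ℤ, ⇑(F a b) =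
        fun v : Fin d → X => fun i : Fin d => (T.toEquiv ^ (a + ((i : ℕ) + 1) * b)) (v i) :=
      fun a b => rfl
    apply Set.Subset.antisymm
    · -- ⊆
      have hclosed : IsClosed (⋃ l ∈ Finset.range n, ⋃ k ∈ Finset.range n,
          (fun v : Fin d → X =>
              fun i : Fin d => (T.toEquiv ^ ((l : ℤ) + ((i : ℕ) + 1) * (k : ℤ))) (v i)) ''
            NdFull d (T.toEquiv ^ n)) := by
        apply Set.Finite.isClosed_biUnion (Finset.range n).finite_toSet
        intro l _
        apply Set.Finite.isClosed_biUnion (Finset.range n).finite_toSet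
        intro k _
        rw [← hFcoe]
        exact (F l k).isClosedMap _ isClosed_closure
      apply closure_minimal ?_ hclosed
      rintro v ⟨x, k, l, rfl⟩
      simp only [Set.mem_iUnion, Finset.mem_range]
      have hkm : ((k % (n : ℤ)).toNat : ℤ) = k % n := Int.toNat_of_nonneg (Int.emod_nonneg k hn0)
      have hlm : ((l % (n : ℤ)).toNat : ℤ) = l % n := Int.toNat_of_nonneg (Int.emod_nonneg l hn0)
      have hklt : (k % (n : ℤ)).toNat < n := by
        have := Int.emod_lt_of_pos k (by exact_mod_cast hn : (0:ℤ) < n)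
        omega
      have hllt : (l % (n : ℤ)).toNat < n := by
        have := Int.emod_lt_of_pos l (by exact_mod_cast hn : (0:ℤ) < n)
        omega
      refine ⟨(k % (n : ℤ)).toNat, hklt, (l % (n : ℤ)).toNat, hllt,
        (fun i : Fin d => ((T.toEquiv ^ n) ^ (k / (n : ℤ) + ((i : ℕ) + 1) * (l / (n : ℤ)))) x),
        subset_closure ⟨x, k / (n : ℤ), l / (n : ℤ), rfl⟩, ?_⟩
      funext i
      simp only [hkm, hlm, hnpow, ← Equiv.Perm.mul_apply, ← zpow_add]
      have hek := Int.mul_ediv_add_emod k (n : ℤ)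
      have hel := Int.mul_ediv_add_emod l (n : ℤ)
      have hexp : k % (n : ℤ) + ((i : ℕ) + 1) * (l % (n : ℤ))
          + (n : ℤ) * (k / (n : ℤ) + ((i : ℕ) + 1) * (l / (n : ℤ)))
          = k + ((i : ℕ) + 1) * l := by linear_combination hek + ((i : ℕ) + 1 : ℤ) * hel
      rw [hexp]
    · -- ⊇
      intro v hv
      simp only [Set.mem_iUnion, Finset.mem_range] at hv
      obtain ⟨a, _, b, _, w, hw, rfl⟩ := hv
      rw [← hFcoe]
      have h1 : ⇑(F a b) w ∈ ⇑(F a b) '' NdFull d (T.toEquiv ^ n) := ⟨w, hw, rfl⟩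
      refine closure_mono ?_ ((image_closure_subset_closure_image (F a b).continuous) h1)
      rintro u ⟨u', ⟨x, q, r, rfl⟩, rfl⟩
      refine ⟨x, (a : ℤ) + n * q, (b : ℤ) + n * r, ?_⟩
      rw [hFcoe]
      funext i
      simp only [hnpow, ← Equiv.Perm.mul_apply, ← zpow_add]
      have hexp : (a : ℤ) + ((i : ℕ) + 1) * b + (n : ℤ) * (q + ((i : ℕ) + 1) * r)
          = ((a : ℤ) + n * q) + ((i : ℕ) + 1) * ((b : ℤ) + n * r) := by ring
      rw [hexp]
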